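/- For every r > 0 and every s′ ∈ ℝ with |s′| ≤ 1/2, the complementary-series spherical function value satisfies (1/(√2·π)) · r · ∫_{−1}^{1} e^{s′·r·x}/√(cosh r − cosh(r·x)) dx ≤ (r + 1)·e^{−r·(1/2 − |s′|)}. -/

import Mathlib

open Real

open MeasureTheory Set intervalIntegral

set_option maxHeartbeats 1000000

lemma aux_exp_chord {s : ℝ} (h0 : 0 ≤ s) (h2 : s ≤ 2) :
    Real.exp (-s) ≤ 1 - s * (1 - Real.exp (-2)) / 2 := by
  have h := convexOn_exp.2 (Set.mem_univ (0:ℝ)) (Set.mem_univ (-2:ℝ))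
    (show (0:ℝ) ≤ 1 - s/2 by linarith) (show (0:ℝ) ≤ s/2 by linarith) (by ring)
  simp only [smul_eq_mul] at h
  have harg : (1 - s/2) * 0 + (s/2) * (-2) = -s := by ring
  rw [harg, Real.exp_zero] at h
  linarith

lemma aux_exp_half {r : ℝ} (h0 : 0 ≤ r) (h2 : r ≤ 2) : Real.exp (r/2) ≤ r + 1 := by
  have h := convexOn_exp.2 (Set.mem_univ (0:ℝ)) (Set.mem_univ (1:ℝ))
    (show (0:ℝ) ≤ 1 - r/2 by linarith) (show (0:ℝ) ≤ r/2 by linarith) (by ring)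
  simp only [smul_eq_mul] at h
  have harg : (1 - r/2) * 0 + (r/2) * 1 = r/2 := by ring
  rw [harg, Real.exp_zero] at h
  have he : Real.exp 1 < 2.7182818286 := Real.exp_one_lt_d9
  nlinarith

lemma cosh_diff (a b : ℝ) : Real.cosh a - Real.cosh b
    = (Real.exp a - Real.exp b) * (1 - Real.exp (-(a+b))) / 2 := by
  rw [Real.cosh_eq, Real.cosh_eq]
  have h1 : Real.exp (-(a+b)) = Real.exp (-a) * Real.exp (-b) := by
    rw [← Real.exp_add]; ring_nf
  have h2 : Real.exp a * Real.exp (-a) = 1 := by rw [← Real.exp_add]; simp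
  have h3 : Real.exp b * Real.exp (-b) = 1 := by rw [← Real.exp_add]; simp
  rw [h1]
  linear_combination (Real.exp (-b)/2) * h2 - (Real.exp (-a)/2) * h3

lemma exp_lb (t : ℝ) (ht : 0 ≤ t) : t * Real.exp (t/2) ≤ Real.exp t - 1 := by
  have h : t/2 ≤ Real.sinh (t/2) := Real.self_le_sinh_iff.2 (by linarith)
  rw [Real.sinh_eq] at h
  have hp : 0 < Real.exp (t/2) := Real.exp_pos _
  have h2 : Real.exp (t/2) * Real.exp (t/2) = Real.exp t := by
    rw [← Real.exp_add]; ring_nf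
  have h3 : Real.exp (t/2) * Real.exp (-(t/2)) = 1 := by rw [← Real.exp_add]; simp
  nlinarith [h, hp, h2, h3, mul_le_mul_of_nonneg_left h hp.le]

lemma cosh_lb_quad {r u : ℝ} (h0 : 0 ≤ u) (hur : u ≤ r) :
    (r^2 - u^2)/2 ≤ Real.cosh r - Real.cosh u := by
  rw [cosh_diff]
  have ht : 0 ≤ r - u := by linarith
  have hs : 0 ≤ r + u := by linarith
  -- exp r - exp u ≥ (r-u) * exp ((r+u)/2)
  have hA : (r - u) * Real.exp ((r+u)/2) ≤ Real.exp r - Real.exp u := by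
    have h1 := mul_le_mul_of_nonneg_left (exp_lb (r-u) ht) (Real.exp_pos u).le
    have e1 : Real.exp u * Real.exp (r-u) = Real.exp r := by rw [← Real.exp_add]; ring_nf
    have e2 : Real.exp u * Real.exp ((r-u)/2) = Real.exp ((r+u)/2) := by
      rw [← Real.exp_add]; ring_nf
    nlinarith [h1, e1, e2]
  have hB : (r + u) * Real.exp (-((r+u)/2)) ≤ 1 - Real.exp (-(r+u)) := by
    have h1 := mul_le_mul_of_nonneg_left (exp_lb (r+u) hs) (Real.exp_pos (-(r+u))).le
    have e1 : Real.exp (-(r+u)) * Real.exp (r+u) = 1 := by rw [← Real.exp_add, neg_add_cancel, Real.exp_zero]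
    have e2 : Real.exp (-(r+u)) * Real.exp ((r+u)/2) = Real.exp (-((r+u)/2)) := by
      rw [← Real.exp_add]; ring_nf
    nlinarith [h1, e1, e2]
  have hAc : 0 ≤ (r - u) * Real.exp ((r+u)/2) := by positivity
  have hBc : 0 ≤ (r + u) * Real.exp (-((r+u)/2)) := by positivity
  have hprod := mul_le_mul hA hB hBc (by linarith [Real.exp_le_exp.2 hur] : (0:ℝ) ≤ Real.exp r - Real.exp u)
  have e3 : Real.exp ((r+u)/2) * Real.exp (-((r+u)/2)) = 1 := by rw [← Real.exp_add]; simp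
  nlinarith [hprod, e3]

lemma cosh_lb_exp {r u : ℝ} (h0 : 0 ≤ u) (hur : u ≤ r) :
    (1 - Real.exp (-r)) * (Real.exp r - Real.exp u) / 2 ≤ Real.cosh r - Real.cosh u := by
  rw [cosh_diff]
  have h1 : Real.exp (-(r+u)) ≤ Real.exp (-r) := Real.exp_le_exp.2 (by linarith)
  have h2 : Real.exp u ≤ Real.exp r := Real.exp_le_exp.2 hur
  nlinarith [h1, h2]

lemma rpow_neg_half_eq {y : ℝ} (hy : 0 ≤ y) : y ^ (-(1/2):ℝ) = 1 / Real.sqrt y := by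
  rw [Real.rpow_neg hy, Real.sqrt_eq_rpow]; norm_num

lemma invsqrt_integrable :
    IntervalIntegrable (fun x : ℝ => 1 / Real.sqrt (1 - x^2)) volume (-1) 1 := by
  have hmaj : IntervalIntegrable
      (fun x : ℝ => (1 - x) ^ (-(1/2):ℝ) + (x + 1) ^ (-(1/2):ℝ)) volume (-1) 1 := by
    have h1 : IntervalIntegrable (fun x : ℝ => (1 - x) ^ (-(1/2):ℝ)) volume (-1) 1 := by
      have := (intervalIntegrable_rpow' (a := 0) (b := 2)
        (r := (-(1/2):ℝ)) (by norm_num)).comp_sub_left 1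
      norm_num at this
      exact this.symm
    have h2 : IntervalIntegrable (fun x : ℝ => (x + 1) ^ (-(1/2):ℝ)) volume (-1) 1 := by
      have := (intervalIntegrable_rpow' (a := 0) (b := 2)
        (r := (-(1/2):ℝ)) (by norm_num)).comp_add_right 1
      norm_num at this
      exact this
    exact h1.add h2
  refine hmaj.mono_fun' (Measurable.aestronglyMeasurable (by fun_prop)) ?_
  have hIoc : uIoc (-1:ℝ) 1 = Ioc (-1) 1 := uIoc_of_le (by norm_num)
  rw [hIoc]
  filter_upwards [ae_restrict_mem measurableSet_Ioc] with x hx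
  obtain ⟨hx1, hx2⟩ := hx
  have hnn : 0 ≤ 1 / Real.sqrt (1 - x^2) := by positivity
  rw [Real.norm_eq_abs, abs_of_nonneg hnn]
  have h1x : (0:ℝ) ≤ 1 - x := by linarith
  have h1x' : (0:ℝ) < x + 1 := by linarith
  rcases le_total 0 x with hx0 | hx0
  · -- use (1-x) term
    have hle : (1:ℝ) - x ≤ 1 - x^2 := by nlinarith
    have : 1 / Real.sqrt (1 - x^2) ≤ (1 - x) ^ (-(1/2):ℝ) := by
      rw [rpow_neg_half_eq h1x]
      rcases eq_or_lt_of_le h1x with h | h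
      · rw [← h]; simp [Real.sqrt_zero]
        have : (1:ℝ) - x^2 = 0 := by nlinarith
        rw [this]; simp
      · exact one_div_le_one_div_of_le (Real.sqrt_pos.2 h) (Real.sqrt_le_sqrt hle)
    have hnn2 : (0:ℝ) ≤ (x + 1) ^ (-(1/2):ℝ) := Real.rpow_nonneg h1x'.le _
    linarith
  · -- use (x+1) term
    have hle : x + 1 ≤ 1 - x^2 := by nlinarith
    have : 1 / Real.sqrt (1 - x^2) ≤ (x + 1) ^ (-(1/2):ℝ) := by
      rw [rpow_neg_half_eq h1x'.le]
      exact one_div_le_one_div_of_le (Real.sqrt_pos.2 h1x') (Real.sqrt_le_sqrt hle)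
    have hnn2 : (0:ℝ) ≤ (1 - x) ^ (-(1/2):ℝ) := Real.rpow_nonneg h1x _
    linarith

lemma invsqrt_integral : ∫ x in (-1:ℝ)..1, 1 / Real.sqrt (1 - x^2) = π := by
  have h := intervalIntegral.integral_eq_sub_of_hasDeriv_right_of_le
    (f := Real.arcsin) (f' := fun x => 1 / Real.sqrt (1 - x^2))
    (by norm_num : (-1:ℝ) ≤ 1)
    (Real.continuous_arcsin.continuousOn)
    (fun x hx => (Real.hasDerivAt_arcsin (ne_of_gt hx.1) (ne_of_lt hx.2)).hasDerivWithinAt)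
    invsqrt_integrable
  rw [h, Real.arcsin_one, Real.arcsin_neg_one]
  ring

/-- Upper bound on the complementary-series spherical function: for `r > 0` and `|s′| ≤ 1/2`,
`(1/(√2·π)) · r · ∫_{−1}^{1} e^{s′·r·x}/√(cosh r − cosh(r·x)) dx ≤ (r+1)·e^{−r·(1/2 − |s′|)}`. -/
lemma final_bound (r N : ℝ) (hr2 : 2 ≤ r) (hN : 0 < N) :
    1 / (Real.sqrt 2 * π) * r *
      ((N / Real.sqrt ((1 - Real.exp (-r)) * Real.exp r * (1 - Real.exp (-2)) / 2)) * (2 + 4/r))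
      ≤ (r + 1) * (Real.exp (-(r/2)) * N) := by
  have hr : (0:ℝ) < r := by linarith
  have hπ : (0:ℝ) < π := Real.pi_pos
  have he2 : Real.exp (-2:ℝ) < 1 := Real.exp_lt_one_iff.2 (by norm_num)
  have her : Real.exp (-r) < 1 := Real.exp_lt_one_iff.2 (by linarith)
  set W : ℝ := (1 - Real.exp (-r)) * Real.exp r * (1 - Real.exp (-2)) / 2 with hWdef
  have hW : 0 < W := by
    rw [hWdef]
    have := mul_pos (mul_pos (by linarith : (0:ℝ) < 1 - Real.exp (-r)) (Real.exp_pos r))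
      (by linarith : (0:ℝ) < 1 - Real.exp (-2))
    linarith
  have hL : 1 / (Real.sqrt 2 * π) * r * ((N / Real.sqrt W) * (2 + 4/r))
      = N * (2*r + 4) / (Real.sqrt 2 * π * Real.sqrt W) := by
    have hsW : 0 < Real.sqrt W := Real.sqrt_pos.2 hW
    field_simp
  rw [hL, div_le_iff₀ (by positivity : (0:ℝ) < Real.sqrt 2 * π * Real.sqrt W)]
  have hexpr : Real.exp (-(r/2)) = Real.sqrt (Real.exp (-r)) := by
    rw [show -(r/2) = (-r)/2 from by ring, Real.exp_half]
  have hWe : W * Real.exp (-r) = (1 - Real.exp (-r)) * (1 - Real.exp (-2)) / 2 := by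
    rw [hWdef]
    have hm : Real.exp r * Real.exp (-r) = 1 := by
      rw [← Real.exp_add]; simp
    linear_combination ((1 - Real.exp (-r)) * (1 - Real.exp (-2)) / 2) * hm
  have hee : Real.exp (-r) ≤ Real.exp (-2:ℝ) := Real.exp_le_exp.2 (by linarith)
  have hlow : (1 - Real.exp (-2)) * (1 - Real.exp (-2)) / 2 ≤ W * Real.exp (-r) := by
    rw [hWe]
    nlinarith [he2, hee, Real.exp_pos (-2:ℝ)]
  have h1e2 : (0:ℝ) < 1 - Real.exp (-2) := by linarith
  have hsqlow : (1 - Real.exp (-2)) / Real.sqrt 2 ≤ Real.sqrt (W * Real.exp (-r)) := by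
    have hpos2 : 0 < (1 - Real.exp (-2)) / Real.sqrt 2 := by positivity
    have h1 : ((1 - Real.exp (-2)) / Real.sqrt 2)^2
        = (1 - Real.exp (-2)) * (1 - Real.exp (-2)) / 2 := by
      rw [div_pow, Real.sq_sqrt (by norm_num : (0:ℝ) ≤ 2)]
      ring
    calc (1 - Real.exp (-2)) / Real.sqrt 2
        = Real.sqrt (((1 - Real.exp (-2)) / Real.sqrt 2)^2) := (Real.sqrt_sq hpos2.le).symm
      _ ≤ Real.sqrt (W * Real.exp (-r)) := Real.sqrt_le_sqrt (by rw [h1]; exact hlow)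
  have hq : (1 - Real.exp (-2)) ≤ Real.sqrt 2 * (Real.exp (-(r/2)) * Real.sqrt W) := by
    have h2 := mul_le_mul_of_nonneg_left hsqlow (Real.sqrt_nonneg 2)
    have hl : Real.sqrt 2 * ((1 - Real.exp (-2)) / Real.sqrt 2) = 1 - Real.exp (-2) := by
      have : Real.sqrt 2 ≠ 0 := by positivity
      field_simp
    have hrr2 : Real.sqrt (W * Real.exp (-r)) = Real.exp (-(r/2)) * Real.sqrt W := by
      rw [Real.sqrt_mul hW.le, hexpr]; ring
    rw [hl, hrr2] at h2
    exact h2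
  have hπ3 : (3.141592:ℝ) < π := Real.pi_gt_d6
  have he1 : (2.7182818283:ℝ) < Real.exp 1 := Real.exp_one_gt_d9
  have he1' : (2.718:ℝ) < Real.exp 1 := by linarith
  have he2v : Real.exp (-2:ℝ) = 1 / (Real.exp 1 * Real.exp 1) := by
    rw [Real.exp_neg, ← Real.exp_add]
    norm_num
  have he2b : Real.exp (-2:ℝ) ≤ 0.1354 := by
    rw [he2v, div_le_iff₀ (by positivity)]
    have hp := mul_lt_mul'' he1' he1' (by norm_num) (by norm_num)
    nlinarith [hp]
  have hA : (2.716:ℝ) ≤ π * (1 - Real.exp (-2)) := by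
    have h1E : (0.8646:ℝ) ≤ 1 - Real.exp (-2) := by linarith
    have hp := mul_le_mul hπ3.le h1E (by norm_num) (by positivity)
    nlinarith [hp]
  have hkey : 2*r + 4 ≤ (r+1) * (π * (1 - Real.exp (-2))) := by nlinarith [hA, hr2]
  have hq2 : (r+1) * (π * (1 - Real.exp (-2)))
      ≤ (r+1) * (π * (Real.sqrt 2 * (Real.exp (-(r/2)) * Real.sqrt W))) := by
    apply mul_le_mul_of_nonneg_left _ (by linarith : (0:ℝ) ≤ r+1)
    exact mul_le_mul_of_nonneg_left hq hπ.le
  have hfin : 2*r + 4 ≤ (r+1) * (π * (Real.sqrt 2 * (Real.exp (-(r/2)) * Real.sqrt W))) :=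
    le_trans hkey hq2
  have hlast := mul_le_mul_of_nonneg_left hfin hN.le
  refine le_trans (le_of_eq (by ring)) (le_trans hlast (le_of_eq (by ring)))

theorem spherical_function_complementary_bound (r : ℝ) (hr : 0 < r) (s' : ℝ)
    (hs : |s'| ≤ 1 / 2) :
    (1 / (Real.sqrt 2 * π)) * r *
        ∫ x in (-1:ℝ)..1, Real.exp (s' * r * x) / Real.sqrt (Real.cosh r - Real.cosh (r * x)) ≤
      (r + 1) * Real.exp (-r * (1 / 2 - |s'|)) := by
  have hπ : (0:ℝ) < π := Real.pi_pos
  have hs2 : (0:ℝ) < Real.sqrt 2 := by positivity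
  set N := Real.exp (|s'| * r) with hNdef
  have hN : 0 < N := Real.exp_pos _
  have hRHS : (r + 1) * Real.exp (-r * (1 / 2 - |s'|)) = (r+1) * (Real.exp (-(r/2)) * N) := by
    rw [hNdef, ← Real.exp_add]
    ring_nf
  set f := fun x : ℝ => Real.exp (s' * r * x) / Real.sqrt (Real.cosh r - Real.cosh (r * x))
    with hfdef
  have hnum : ∀ x : ℝ, |x| ≤ 1 → Real.exp (s' * r * x) ≤ N := by
    intro x hx
    apply Real.exp_le_exp.2
    calc s' * r * x ≤ |s' * r * x| := le_abs_self _
      _ = |s'| * r * |x| := by rw [abs_mul, abs_mul, abs_of_pos hr]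
      _ ≤ |s'| * r * 1 := by
          apply mul_le_mul_of_nonneg_left hx (by positivity)
      _ = |s'| * r := by ring
  have hcosh : ∀ x : ℝ, Real.cosh (r * x) = Real.cosh (r * |x|) := by
    intro x
    rw [← Real.cosh_abs (r*x), abs_mul, abs_of_pos hr]
  by_cases hf : IntervalIntegrable f volume (-1) 1
  swap
  · rw [hfdef] at hf
    rw [intervalIntegral.integral_undef hf]
    have h0 : (1 / (Real.sqrt 2 * π)) * r * 0 = 0 := by ring
    rw [h0]
    positivity
  rcases le_total r 2 with hr2 | hr2
  · -- small r case
    set C := N * Real.sqrt 2 / r with hCdef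
    have hmono : ∀ x ∈ Icc (-1:ℝ) 1, f x ≤ C * (1 / Real.sqrt (1 - x^2)) := by
      intro x hx
      obtain ⟨hx1, hx2⟩ := hx
      have hxabs : |x| ≤ 1 := abs_le.2 ⟨hx1, hx2⟩
      have hu0 : 0 ≤ r * |x| := by positivity
      have hur : r * |x| ≤ r := by nlinarith [abs_nonneg x]
      have hden := cosh_lb_quad hu0 hur
      have hden' : r^2 * (1 - x^2) / 2 ≤ Real.cosh r - Real.cosh (r * x) := by
        rw [hcosh x]
        calc r^2 * (1-x^2)/2 = (r^2 - (r*|x|)^2)/2 := by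
              rw [mul_pow, sq_abs]; ring
          _ ≤ _ := hden
      rcases lt_or_eq_of_le hxabs with hxlt | hxeq
      swap
      · -- |x| = 1 : both sides are zero
        have hcz : Real.cosh (r*x) = Real.cosh r := by
          rw [hcosh x, hxeq, mul_one]
        have h1x : (1:ℝ) - x^2 = 0 := by nlinarith [sq_abs x]
        simp only [hfdef]
        simp [hcz, h1x]
      · have hx2lt : x^2 < 1 := by nlinarith [sq_abs x, abs_nonneg x]
        have hpos : 0 < r * Real.sqrt (1 - x^2) / Real.sqrt 2 := by
          have : 0 < 1 - x^2 := by linarith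
          positivity
        have hsq : Real.sqrt (r^2 * (1 - x^2) / 2) = r * Real.sqrt (1-x^2) / Real.sqrt 2 := by
          have he : r^2 * (1 - x^2) / 2 = (r * Real.sqrt (1-x^2) / Real.sqrt 2)^2 := by
            rw [div_pow, mul_pow, Real.sq_sqrt (by nlinarith), Real.sq_sqrt (by norm_num : (0:ℝ) ≤ 2)]
          rw [he, Real.sqrt_sq hpos.le]
        have hle : r * Real.sqrt (1-x^2) / Real.sqrt 2 ≤ Real.sqrt (Real.cosh r - Real.cosh (r*x)) := by
          rw [← hsq]
          exact Real.sqrt_le_sqrt hden'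
        have key : f x ≤ N / (r * Real.sqrt (1-x^2) / Real.sqrt 2) :=
          div_le_div₀ hN.le (hnum x hxabs) hpos hle
        calc f x ≤ N / (r * Real.sqrt (1-x^2) / Real.sqrt 2) := key
          _ = C * (1 / Real.sqrt (1-x^2)) := by
              rw [hCdef]
              have h1 : Real.sqrt (1-x^2) ≠ 0 := ne_of_gt (Real.sqrt_pos.2 (by linarith))
              field_simp
    have hgint : IntervalIntegrable (fun x : ℝ => C * (1 / Real.sqrt (1 - x^2))) volume (-1) 1 :=
      invsqrt_integrable.const_mul C
    have h1 : (∫ x in (-1:ℝ)..1, f x) ≤ ∫ x in (-1:ℝ)..1, C * (1 / Real.sqrt (1 - x^2)) :=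
      intervalIntegral.integral_mono_on (by norm_num) hf hgint hmono
    have h2 : (∫ x in (-1:ℝ)..1, C * (1 / Real.sqrt (1 - x^2))) = C * π := by
      rw [intervalIntegral.integral_const_mul, invsqrt_integral]
    rw [h2] at h1
    have hcoef : (0:ℝ) ≤ 1 / (Real.sqrt 2 * π) * r := by positivity
    calc (1 / (Real.sqrt 2 * π)) * r * ∫ x in (-1:ℝ)..1, f x
        ≤ (1 / (Real.sqrt 2 * π)) * r * (C * π) := mul_le_mul_of_nonneg_left h1 hcoef
      _ = N := by
          rw [hCdef]; field_simp
      _ ≤ (r + 1) * Real.exp (-r * (1 / 2 - |s'|)) := by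
          rw [hRHS]
          have hh := aux_exp_half hr.le hr2
          have hep : 0 < Real.exp (-(r/2)) := Real.exp_pos _
          have hmul : Real.exp (r/2) * Real.exp (-(r/2)) = 1 := by
            rw [← Real.exp_add]; ring_nf; exact Real.exp_zero
          have h3 : 1 ≤ (r+1) * Real.exp (-(r/2)) := by
            nlinarith [mul_le_mul_of_nonneg_right hh hep.le, hmul]
          nlinarith [h3, hN]
  · -- large r case : 2 ≤ r
    have h2r0 : 0 < 2/r := by positivity
    have h2r1 : 2/r ≤ 1 := by rw [div_le_one hr]; linarith
    set c1 : ℝ := -1 + 2/r with hc1def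
    set c2 : ℝ := 1 - 2/r with hc2def
    have hc1 : (-1:ℝ) ≤ c1 := by rw [hc1def]; linarith
    have hc12 : c1 ≤ c2 := by rw [hc1def, hc2def]; linarith
    have hc2 : c2 ≤ 1 := by rw [hc2def]; linarith
    have hc20 : 0 ≤ c2 := by rw [hc2def]; linarith
    have he2 : Real.exp (-2:ℝ) < 1 := Real.exp_lt_one_iff.2 (by norm_num)
    have her : Real.exp (-r) < 1 := Real.exp_lt_one_iff.2 (by linarith)
    set W : ℝ := (1 - Real.exp (-r)) * Real.exp r * (1 - Real.exp (-2)) / 2 with hWdef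
    have hW : 0 < W := by
      rw [hWdef]
      have := mul_pos (mul_pos (by linarith : (0:ℝ) < 1 - Real.exp (-r)) (Real.exp_pos r))
        (by linarith : (0:ℝ) < 1 - Real.exp (-2))
      linarith
    have hsW : 0 < Real.sqrt W := Real.sqrt_pos.2 hW
    -- denominator lower bounds
    have hmid : ∀ x : ℝ, |x| ≤ c2 → W ≤ Real.cosh r - Real.cosh (r*x) := by
      intro x hx
      rw [hc2def] at hx
      have hu0 : 0 ≤ r * |x| := by positivity
      have hur : r * |x| ≤ r := by nlinarith [abs_nonneg x]
      have hkey := cosh_lb_exp hu0 hur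
      have hu2 : r * |x| ≤ r - 2 := by
        have := mul_le_mul_of_nonneg_left hx hr.le
        calc r * |x| ≤ r * (1 - 2/r) := this
          _ = r - 2 := by field_simp
      have hexp : Real.exp (r * |x|) ≤ Real.exp r * Real.exp (-2) := by
        rw [← Real.exp_add]
        exact Real.exp_le_exp.2 (by linarith)
      rw [hcosh x]
      refine le_trans ?_ hkey
      rw [hWdef]
      nlinarith [Real.exp_pos r, hexp, her]
    have hedge : ∀ x : ℝ, c2 ≤ |x| → |x| ≤ 1 →
        W * (r * (1 - |x|) / 2) ≤ Real.cosh r - Real.cosh (r*x) := by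
      intro x hx1 hx2
      rw [hc2def] at hx1
      have hu0 : 0 ≤ r * |x| := by positivity
      have hur : r * |x| ≤ r := by nlinarith [abs_nonneg x]
      have hkey := cosh_lb_exp hu0 hur
      set t : ℝ := r - r * |x| with htdef
      have ht0 : 0 ≤ t := by rw [htdef]; linarith
      have ht2 : t ≤ 2 := by
        rw [htdef]
        have := mul_le_mul_of_nonneg_left hx1 hr.le
        have : r * (1 - 2/r) ≤ r * |x| := this
        have hfs : r * (1 - 2/r) = r - 2 := by field_simp
        linarith [hfs ▸ this]
      have hchord := aux_exp_chord ht0 ht2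
      have hexp : Real.exp (r * |x|) = Real.exp r * Real.exp (-t) := by
        rw [← Real.exp_add, htdef]; ring_nf
      have hstep : Real.exp r * (t * (1 - Real.exp (-2)) / 2) ≤ Real.exp r - Real.exp (r * |x|) := by
        rw [hexp]
        nlinarith [Real.exp_pos r, hchord]
      rw [hcosh x]
      refine le_trans ?_ hkey
      have hWt : W * (r * (1 - |x|) / 2)
          = (1 - Real.exp (-r)) * (Real.exp r * (t * (1 - Real.exp (-2)) / 2)) / 2 := by
        rw [hWdef, htdef]; ring
      rw [hWt]
      have h1r : (0:ℝ) ≤ 1 - Real.exp (-r) := by linarith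
      nlinarith [mul_le_mul_of_nonneg_left hstep h1r]
    -- integrability of f on subintervals
    have hsub : ∀ c d : ℝ, -1 ≤ c → c ≤ 1 → -1 ≤ d → d ≤ 1 →
        IntervalIntegrable f volume c d := by
      intro c d h1 h2 h3 h4
      refine hf.mono_set ?_
      rw [Set.uIcc_of_le (by norm_num : (-1:ℝ) ≤ 1)]
      exact Set.uIcc_subset_Icc ⟨h1, h2⟩ ⟨h3, h4⟩
    have hfl := hsub (-1) c1 (by norm_num) (by linarith) hc1 (by linarith)
    have hfm := hsub c1 c2 hc1 (by linarith) (by linarith) hc2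
    have hfr := hsub c2 1 (by linarith) hc2 (by norm_num) (by norm_num)
    -- split the integral
    have hsplit : (∫ x in (-1:ℝ)..1, f x)
        = (∫ x in (-1:ℝ)..c1, f x) + (∫ x in c1..c2, f x) + ∫ x in c2..1, f x := by
      rw [integral_add_adjacent_intervals hfl hfm,
        integral_add_adjacent_intervals (hfl.trans hfm) hfr]
    -- edge constant
    set CE : ℝ := N * Real.sqrt 2 / (Real.sqrt W * Real.sqrt r) with hCEdef
    have hCE : 0 < CE := by rw [hCEdef]; positivity
    -- pointwise bound on right edge
    have hptr : ∀ x ∈ Icc c2 (1:ℝ), f x ≤ CE * (1 - x) ^ (-(1/2):ℝ) := by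
      intro x hx
      obtain ⟨hxa, hxb⟩ := hx
      have hx0 : 0 ≤ x := le_trans hc20 hxa
      have hxabs : |x| = x := abs_of_nonneg hx0
      rcases lt_or_eq_of_le hxb with hlt | heq
      · have hden := hedge x (by rw [hxabs]; exact hxa) (by rw [hxabs]; linarith)
        rw [hxabs] at hden
        have hpos : 0 < Real.sqrt W * Real.sqrt r * Real.sqrt (1-x) / Real.sqrt 2 := by
          have h1x : 0 < 1 - x := by linarith
          positivity
        have hsq : Real.sqrt (W * (r * (1-x) / 2))
            = Real.sqrt W * Real.sqrt r * Real.sqrt (1-x) / Real.sqrt 2 := by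
          have he : W * (r * (1-x) / 2)
              = (Real.sqrt W * Real.sqrt r * Real.sqrt (1-x) / Real.sqrt 2)^2 := by
            rw [div_pow, mul_pow, mul_pow, Real.sq_sqrt hW.le, Real.sq_sqrt hr.le,
              Real.sq_sqrt (by linarith : (0:ℝ) ≤ 1 - x), Real.sq_sqrt (by norm_num : (0:ℝ) ≤ 2)]
            ring
          rw [he, Real.sqrt_sq hpos.le]
        have hle : Real.sqrt W * Real.sqrt r * Real.sqrt (1-x) / Real.sqrt 2
            ≤ Real.sqrt (Real.cosh r - Real.cosh (r*x)) := by
          rw [← hsq]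
          exact Real.sqrt_le_sqrt hden
        have key : f x ≤ N / (Real.sqrt W * Real.sqrt r * Real.sqrt (1-x) / Real.sqrt 2) :=
          div_le_div₀ hN.le (hnum x (by rw [hxabs]; linarith)) hpos hle
        refine le_trans key (le_of_eq ?_)
        rw [hCEdef, rpow_neg_half_eq (by linarith : (0:ℝ) ≤ 1 - x)]
        have h1 : Real.sqrt (1-x) ≠ 0 := ne_of_gt (Real.sqrt_pos.2 (by linarith))
        field_simp
      · -- x = 1
        have hcz : Real.cosh (r*x) = Real.cosh r := by rw [heq, mul_one]
        have h1x : (1:ℝ) - x = 0 := by rw [heq]; ring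
        simp only [hfdef]
        simp [hcz, h1x, Real.zero_rpow (by norm_num : (-(1/2):ℝ) ≠ 0)]
    -- pointwise bound on left edge
    have hptl : ∀ x ∈ Icc (-1:ℝ) c1, f x ≤ CE * (x + 1) ^ (-(1/2):ℝ) := by
      intro x hx
      obtain ⟨hxa, hxb⟩ := hx
      have hx0 : x ≤ 0 := by
        have : c1 ≤ 0 := by rw [hc1def]; linarith
        linarith
      have hxabs : |x| = -x := abs_of_nonpos hx0
      rcases lt_or_eq_of_le hxa with hlt | heq
      · have hden := hedge x (by rw [hxabs, hc2def, hc1def] at *; linarith) (by rw [hxabs]; linarith)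
        rw [hxabs] at hden
        have h1x : 0 < x + 1 := by linarith
        have hpos : 0 < Real.sqrt W * Real.sqrt r * Real.sqrt (x+1) / Real.sqrt 2 := by
          positivity
        have hsq : Real.sqrt (W * (r * (1 - -x) / 2))
            = Real.sqrt W * Real.sqrt r * Real.sqrt (x+1) / Real.sqrt 2 := by
          have he : W * (r * (1 - -x) / 2)
              = (Real.sqrt W * Real.sqrt r * Real.sqrt (x+1) / Real.sqrt 2)^2 := by
            rw [div_pow, mul_pow, mul_pow, Real.sq_sqrt hW.le, Real.sq_sqrt hr.le,
              Real.sq_sqrt (by linarith : (0:ℝ) ≤ x + 1), Real.sq_sqrt (by norm_num : (0:ℝ) ≤ 2)]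
            ring
          rw [he, Real.sqrt_sq hpos.le]
        have hle : Real.sqrt W * Real.sqrt r * Real.sqrt (x+1) / Real.sqrt 2
            ≤ Real.sqrt (Real.cosh r - Real.cosh (r*x)) := by
          rw [← hsq]
          exact Real.sqrt_le_sqrt hden
        have key : f x ≤ N / (Real.sqrt W * Real.sqrt r * Real.sqrt (x+1) / Real.sqrt 2) :=
          div_le_div₀ hN.le (hnum x (by rw [hxabs]; linarith)) hpos hle
        refine le_trans key (le_of_eq ?_)
        rw [hCEdef, rpow_neg_half_eq (by linarith : (0:ℝ) ≤ x + 1)]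
        have h1 : Real.sqrt (x+1) ≠ 0 := ne_of_gt (Real.sqrt_pos.2 (by linarith))
        field_simp
      · -- x = -1
        have hcz : Real.cosh (r*x) = Real.cosh r := by
          rw [← heq]
          rw [show r * (-1:ℝ) = -r by ring, Real.cosh_neg]
        have h1x : x + 1 = 0 := by rw [← heq]; ring
        simp only [hfdef]
        simp [hcz, h1x, Real.zero_rpow (by norm_num : (-(1/2):ℝ) ≠ 0)]
    -- pointwise bound in the middle
    have hptm : ∀ x ∈ Icc c1 c2, f x ≤ N / Real.sqrt W := by
      intro x hx
      obtain ⟨hxa, hxb⟩ := hx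
      have hxabs : |x| ≤ c2 := by
        rw [abs_le, hc2def]
        constructor
        · rw [hc1def] at hxa; linarith
        · rw [hc2def] at hxb; linarith
      have hden := hmid x hxabs
      have hx1 : |x| ≤ 1 := by rw [hc2def] at hxabs; rw [abs_le] at hxabs ⊢; constructor <;> linarith [hxabs.1, hxabs.2]
      exact div_le_div₀ hN.le (hnum x hx1) hsW (Real.sqrt_le_sqrt hden)
    -- majorant integrability on edges
    have hgr : IntervalIntegrable (fun x : ℝ => CE * (1 - x) ^ (-(1/2):ℝ)) volume c2 1 := by
      have := (intervalIntegrable_rpow' (a := 1 - c2) (b := (0:ℝ))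
        (r := (-(1/2):ℝ)) (by norm_num)).comp_sub_left 1
      have h2 : (1:ℝ) - (1 - c2) = c2 := by ring
      rw [h2, sub_zero] at this
      exact this.const_mul CE
    have hgl : IntervalIntegrable (fun x : ℝ => CE * (x + 1) ^ (-(1/2):ℝ)) volume (-1) c1 := by
      have := (intervalIntegrable_rpow' (a := (0:ℝ)) (b := c1 + 1)
        (r := (-(1/2):ℝ)) (by norm_num)).comp_add_right 1
      have h2 : (0:ℝ) - 1 = -1 := by ring
      rw [h2, add_sub_cancel_right] at this
      exact this.const_mul CE
    -- bound each piece
    have hB2 : (∫ x in c1..c2, f x) ≤ (c2 - c1) * (N / Real.sqrt W) := by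
      have := intervalIntegral.integral_mono_on hc12 hfm
        (_root_.intervalIntegrable_const (c := N / Real.sqrt W)) hptm
      simpa [smul_eq_mul, mul_div_assoc] using this
    have hvr : (∫ x in c2..1, (1 - x) ^ (-(1/2):ℝ)) = 2 * Real.sqrt (2/r) := by
      rw [show (fun x : ℝ => (1 - x) ^ (-(1/2):ℝ)) = (fun x : ℝ => ((fun u : ℝ => u ^ (-(1/2):ℝ)) (1 - x))) from rfl]
      rw [intervalIntegral.integral_comp_sub_left (fun u : ℝ => u ^ (-(1/2):ℝ)) 1]
      rw [integral_rpow (Or.inl (by norm_num : (-1:ℝ) < -(1/2)))]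
      rw [sub_self, show (1:ℝ) - c2 = 2/r from by rw [hc2def]; ring]
      rw [Real.zero_rpow (by norm_num : (-(1/2):ℝ) + 1 ≠ 0)]
      rw [show (-(1/2):ℝ) + 1 = 1/2 from by norm_num]
      rw [← Real.sqrt_eq_rpow]
      ring
    have hvl : (∫ x in (-1:ℝ)..c1, (x + 1) ^ (-(1/2):ℝ)) = 2 * Real.sqrt (2/r) := by
      rw [show (fun x : ℝ => (x + 1) ^ (-(1/2):ℝ)) = (fun x : ℝ => ((fun u : ℝ => u ^ (-(1/2):ℝ)) (x + 1))) from rfl]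
      rw [intervalIntegral.integral_comp_add_right (fun u : ℝ => u ^ (-(1/2):ℝ)) 1]
      rw [integral_rpow (Or.inl (by norm_num : (-1:ℝ) < -(1/2)))]
      rw [show (-1:ℝ) + 1 = 0 from by ring, show c1 + 1 = 2/r from by rw [hc1def]; ring]
      rw [Real.zero_rpow (by norm_num : (-(1/2):ℝ) + 1 ≠ 0)]
      rw [show (-(1/2):ℝ) + 1 = 1/2 from by norm_num]
      rw [← Real.sqrt_eq_rpow]
      ring
    have hB3 : (∫ x in c2..1, f x) ≤ CE * (2 * Real.sqrt (2/r)) := by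
      have := intervalIntegral.integral_mono_on hc2 hfr hgr hptr
      rwa [intervalIntegral.integral_const_mul, hvr] at this
    have hB1 : (∫ x in (-1:ℝ)..c1, f x) ≤ CE * (2 * Real.sqrt (2/r)) := by
      have := intervalIntegral.integral_mono_on hc1 hfl hgl hptl
      rwa [intervalIntegral.integral_const_mul, hvl] at this
    -- edge value simplification
    have hrr : Real.sqrt r * Real.sqrt r = r := Real.mul_self_sqrt hr.le
    have h22 : Real.sqrt 2 * Real.sqrt 2 = 2 := Real.mul_self_sqrt (by norm_num)
    have hsrpos : 0 < Real.sqrt r := Real.sqrt_pos.2 hr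
    have hedgeval : CE * (2 * Real.sqrt (2/r)) = 4 * N / (Real.sqrt W * r) := by
      rw [hCEdef, Real.sqrt_div (by norm_num : (0:ℝ) ≤ 2) r]
      field_simp
      linear_combination (2*r) * h22 - 4 * hrr
    -- total bound
    have hT : (∫ x in (-1:ℝ)..1, f x) ≤ (N / Real.sqrt W) * (2 + 4/r) := by
      rw [hsplit]
      have : (c2 - c1) = 2 - 4/r := by rw [hc1def, hc2def]; ring
      calc (∫ x in (-1:ℝ)..c1, f x) + (∫ x in c1..c2, f x) + ∫ x in c2..1, f x
          ≤ CE * (2 * Real.sqrt (2/r)) + (c2 - c1) * (N / Real.sqrt W)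
            + CE * (2 * Real.sqrt (2/r)) := by linarith [hB1, hB2, hB3]
        _ = (N / Real.sqrt W) * (2 + 4/r) := by
            rw [hedgeval, this]
            field_simp
            ring
    -- final numeric inequality
    have hcoef : (0:ℝ) ≤ 1 / (Real.sqrt 2 * π) * r := by positivity
    have hfinal : 1 / (Real.sqrt 2 * π) * r * ((N / Real.sqrt W) * (2 + 4/r))
        ≤ (r + 1) * (Real.exp (-(r/2)) * N) := by
      rw [hWdef]
      exact final_bound r N hr2 hN
    calc (1 / (Real.sqrt 2 * π)) * r * ∫ x in (-1:ℝ)..1, f x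
        ≤ 1 / (Real.sqrt 2 * π) * r * ((N / Real.sqrt W) * (2 + 4/r)) :=
          mul_le_mul_of_nonneg_left hT hcoef
      _ ≤ (r + 1) * (Real.exp (-(r/2)) * N) := hfinal
      _ = (r + 1) * Real.exp (-r * (1 / 2 - |s'|)) := hRHS.symm
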